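/- For 1 ≤ i ≤ k/2, let Γ_i be the subgraph of M_k(q) induced by the color-i edges. For each 1 ≤ i ≤ k/2 − 1, the map f([a,b]) = [ωa, b] is a well-defined bijection of the vertex set of M_k(q) such that for all vertices u, v, u → v is an edge of color i if and only if f(u) → f(v) is an edge of color i+1; consequently Γ_1, Γ_2, …, Γ_{k/2} are pairwise isomorphic. -/

import Mathlib

/-- `S_k = ⟨ω^k⟩`, the set of nonzero `k`-th power residues of `F`
(for `ω` a primitive element of the finite field `F`). -/
def Sk {F : Type} [Field F] (ω : F) (k : ℕ) : Set F :=
  {x | ∃ n : ℕ, x = ω ^ (k * n)}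

/-- `S_{k,0} = {0}` and `S_{k,i} = ω^(i-1) • S_k` for `i ≥ 1`. -/
def Ski {F : Type} [Field F] (ω : F) (k : ℕ) : ℕ → Set F
  | 0 => {0}
  | (i + 1) => {x | ∃ n : ℕ, x = ω ^ i * ω ^ (k * n)}

/-- The vertex set of the Mathon-type digraph `M_k(q)`: equivalence classes of
`X = (F × F) \ {(0,0)}` under `(a,b) ~ (ag,bg)` for `g ∈ S_k`. -/
def Vtx (F : Type) [Field F] (ω : F) (k : ℕ) : Type :=
  Quot (fun p q : {p : F × F // p ≠ (0, 0)} =>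
    ∃ g ∈ Sk ω k, q.1 = (p.1.1 * g, p.1.2 * g))

/-- The equivalence class `[a, b]` of a nonzero pair `(a, b)`. -/
def vmk {F : Type} [Field F] (ω : F) (k : ℕ) (p : {p : F × F // p ≠ (0, 0)}) :
    Vtx F ω k :=
  Quot.mk _ p

/-- `[a,b] → [c,d]` is an edge of color `i` in `M_k(q)` iff `bc - ad ∈ S_{k,i}`
(well-defined since `g S_{k,i} = S_{k,i}` for `g ∈ S_k`). -/
def Edge {F : Type} [Field F] (ω : F) (k : ℕ) (u v : Vtx F ω k) (i : ℕ) : Prop :=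
  ∃ p q : {p : F × F // p ≠ (0, 0)},
    u = vmk ω k p ∧ v = vmk ω k q ∧
      p.1.2 * q.1.1 - p.1.1 * q.1.2 ∈ Ski ω k i

lemma aux_ne {F : Type} [Field F] {c : F} (hc : c ≠ 0)
    (p : {p : F × F // p ≠ (0,0)}) : ((c * p.1.1, p.1.2) : F × F) ≠ (0, 0) := by
  intro h
  apply p.2
  have h1 : c * p.1.1 = 0 := congrArg Prod.fst h
  have h2 : p.1.2 = 0 := congrArg Prod.snd h
  have h3 : p.1.1 = 0 := by
    rcases mul_eq_zero.mp h1 with h | h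
    · exact absurd h hc
    · exact h
  rw [Prod.ext_iff]
  exact ⟨h3, h2⟩

/-- multiply first coordinate by a nonzero constant. -/
def mulF {F : Type} [Field F] (ω : F) (k : ℕ) (c : F) (hc : c ≠ 0) :
    Vtx F ω k → Vtx F ω k :=
  Quot.lift (fun p => vmk ω k ⟨(c * p.1.1, p.1.2), aux_ne hc p⟩)
    (by
      rintro p q ⟨g, hg, hq⟩
      apply Quot.sound
      refine ⟨g, hg, ?_⟩
      simp only [hq, Prod.ext_iff]
      exact ⟨by ring, trivial⟩)

lemma mulF_cancel {F : Type} [Field F] (ω : F) (k : ℕ) (c : F) (hc : c ≠ 0)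
    (u : Vtx F ω k) : mulF ω k c⁻¹ (inv_ne_zero hc) (mulF ω k c hc u) = u := by
  induction u using Quot.ind with
  | mk p =>
    show vmk ω k ⟨(c⁻¹ * (c * p.1.1), p.1.2), _⟩ = vmk ω k p
    unfold vmk
    apply congrArg
    apply Subtype.ext
    show (c⁻¹ * (c * p.1.1), p.1.2) = p.1
    rw [inv_mul_cancel_left₀ hc]

lemma mulF_cancel' {F : Type} [Field F] (ω : F) (k : ℕ) (c : F) (hc : c ≠ 0)
    (u : Vtx F ω k) : mulF ω k c hc (mulF ω k c⁻¹ (inv_ne_zero hc) u) = u := by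
  induction u using Quot.ind with
  | mk p =>
    show vmk ω k ⟨(c * (c⁻¹ * p.1.1), p.1.2), _⟩ = vmk ω k p
    unfold vmk
    apply congrArg
    apply Subtype.ext
    show (c * (c⁻¹ * p.1.1), p.1.2) = p.1
    rw [mul_inv_cancel_left₀ hc]

theorem stmt_15 (k : ℕ) (hk2 : 2 ≤ k) (hke : Even k)
    (F : Type) [Field F] [Fintype F]
    (hq : Fintype.card F % (2 * k) = k + 1)
    (ω : F) (hω : ∀ x : F, x ≠ 0 → ∃ n : ℕ, x = ω ^ n) :
    ∀ i : ℕ, 1 ≤ i → i ≤ k / 2 - 1 →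
      ∃ f : Vtx F ω k → Vtx F ω k,
        Function.Bijective f ∧
        (∀ (p : {p : F × F // p ≠ (0, 0)})
            (h : ((ω * p.1.1, p.1.2) : F × F) ≠ (0, 0)),
          f (vmk ω k p) = vmk ω k ⟨(ω * p.1.1, p.1.2), h⟩) ∧
        (∀ u v : Vtx F ω k,
          Edge ω k u v i ↔ Edge ω k (f u) (f v) (i + 1)) := by
  intro i hi _
  obtain ⟨j, rfl⟩ : ∃ j, i = j + 1 := ⟨i - 1, (Nat.succ_pred_eq_of_pos hi).symm⟩
  -- ω ≠ 0
  have hcard : 3 ≤ Fintype.card F := by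
    have h1 : Fintype.card F % (2 * k) ≤ Fintype.card F := Nat.mod_le _ _
    omega
  have hω0 : ω ≠ 0 := by
    rintro rfl
    classical
    have hsub : (Finset.univ : Finset F) ⊆ {0, 1} := by
      intro x _
      rcases eq_or_ne x 0 with rfl | hx
      · simp
      · obtain ⟨n, hn⟩ := hω x hx
        rcases n with _ | n
        · simp only [pow_zero] at hn
          simp [hn]
        · rw [zero_pow (Nat.succ_ne_zero n)] at hn
          exact absurd hn hx
    have hle := Finset.card_le_card hsub
    have h2 : ({0, 1} : Finset F).card ≤ 2 :=
      (Finset.card_insert_le _ _).trans (by simp)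
    rw [Finset.card_univ] at hle
    omega
  refine ⟨mulF ω k ω hω0, ⟨?_, ?_⟩, ?_, ?_⟩
  · exact Function.LeftInverse.injective (mulF_cancel ω k ω hω0)
  · exact Function.RightInverse.surjective (mulF_cancel' ω k ω hω0)
  · intro p h
    rfl
  · intro u v
    constructor
    · rintro ⟨p, q, hu, hv, n, hn⟩
      refine ⟨⟨(ω * p.1.1, p.1.2), aux_ne hω0 p⟩, ⟨(ω * q.1.1, q.1.2), aux_ne hω0 q⟩,
        by rw [hu]; rfl, by rw [hv]; rfl, n, ?_⟩
      show p.1.2 * (ω * q.1.1) - ω * p.1.1 * q.1.2 = ω ^ (j + 1) * ω ^ (k * n)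
      have : p.1.2 * (ω * q.1.1) - ω * p.1.1 * q.1.2
          = ω * (p.1.2 * q.1.1 - p.1.1 * q.1.2) := by ring
      rw [this, hn, pow_succ]
      ring
    · rintro ⟨p, q, hu, hv, n, hn⟩
      have hu' : u = mulF ω k ω⁻¹ (inv_ne_zero hω0) (vmk ω k p) := by
        rw [← hu, mulF_cancel]
      have hv' : v = mulF ω k ω⁻¹ (inv_ne_zero hω0) (vmk ω k q) := by
        rw [← hv, mulF_cancel]
      refine ⟨⟨(ω⁻¹ * p.1.1, p.1.2), aux_ne (inv_ne_zero hω0) p⟩,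
        ⟨(ω⁻¹ * q.1.1, q.1.2), aux_ne (inv_ne_zero hω0) q⟩, hu', hv', n, ?_⟩
      show p.1.2 * (ω⁻¹ * q.1.1) - ω⁻¹ * p.1.1 * q.1.2 = ω ^ j * ω ^ (k * n)
      have h1 : p.1.2 * (ω⁻¹ * q.1.1) - ω⁻¹ * p.1.1 * q.1.2
          = ω⁻¹ * (p.1.2 * q.1.1 - p.1.1 * q.1.2) := by ring
      rw [h1, hn, pow_succ]
      field_simp
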